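/- Let G be an infinite group. A subset A ⊆ G is sparse if and only if no ultrafilter in the closure of G*·G* contains A, where G* is the set of free ultrafilters on G; i.e., Sp_G^∧ = cl(G*G*). Equivalently: A is not sparse if and only if A ∈ qp for some free ultrafilters q, p on G. -/

import Mathlib

def IsSparse {G : Type*} [Group G] (A : Set G) : Prop :=
  ∀ X : Set G, X.Infinite → ∃ F : Set G, F ⊆ X ∧ F.Finite ∧
    (⋂ g ∈ F, (fun x => g * x) '' A).Finite

/-- The standard semigroup multiplication on `βG`. -/
def ufMul {G : Type*} [Group G] (q p : Ultrafilter G) : Ultrafilter G :=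
  q.bind fun x => p.map fun y => x * y

/-- An ultrafilter is free if it is not principal. -/
def IsFreeUF {G : Type*} (p : Ultrafilter G) : Prop :=
  ∀ x : G, p ≠ (pure x : Ultrafilter G)

lemma mem_ufMul_iff {G : Type*} [Group G] {q p : Ultrafilter G} {A : Set G} :
    A ∈ ufMul q p ↔ {x | (fun y => x * y) ⁻¹' A ∈ p} ∈ q := by
  show A ∈ (Ultrafilter.bind q fun x => p.map fun y => x * y) ↔ _
  rw [Ultrafilter.bind]
  show A ∈ Filter.bind (↑q) (fun x => ↑(p.map fun y => x * y)) ↔ _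
  rw [Filter.mem_bind']
  rfl

lemma isFreeUF_iff_le_cofinite {G : Type*} (p : Ultrafilter G) :
    IsFreeUF p ↔ (p : Filter G) ≤ Filter.cofinite := by
  constructor
  · intro h
    rcases p.le_cofinite_or_eq_pure with h' | ⟨a, ha⟩
    · exact h'
    · exact absurd ha (h a)
  · intro h x hx
    have h1 : ({x}ᶜ : Set G) ∈ p := h (by simp)
    have h2 : ({x} : Set G) ∈ p := by rw [hx]; exact rfl
    have h3 := p.toFilter.inter_mem h1 h2
    rw [Set.compl_inter_self] at h3
    exact Filter.empty_notMem (p : Filter G) h3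

lemma infinite_of_mem_free {G : Type*} {p : Ultrafilter G} (hp : IsFreeUF p)
    {s : Set G} (hs : s ∈ p) : s.Infinite := by
  intro hfin
  have hle := (isFreeUF_iff_le_cofinite p).1 hp
  have h1 : sᶜ ∈ p := hle (by simpa using hfin)
  have h3 := p.toFilter.inter_mem h1 hs
  rw [Set.compl_inter_self] at h3
  exact Filter.empty_notMem (p : Filter G) h3

theorem stmt8 {G : Type*} [Group G] [Infinite G] (A : Set G) :
    ¬ IsSparse A ↔
      ∃ q p : Ultrafilter G, IsFreeUF q ∧ IsFreeUF p ∧ A ∈ ufMul q p := by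
  have key : ∀ g : G, (fun y => g⁻¹ * y) ⁻¹' A = (fun x => g * x) '' A := by
    intro g
    rw [show (fun x => g * x) = (g * ·) from rfl, Set.image_mul_left]
  unfold IsSparse
  push_neg
  constructor
  · rintro ⟨X, hXinf, hX⟩
    set f : G → Set G := fun g => (fun x => g * x) '' A with hf
    have hne : (Filter.cofinite ⊓ Filter.generate (f '' X)).NeBot := by
      rw [← Filter.forall_mem_nonempty_iff_neBot]
      intro s hs
      rcases Filter.mem_inf_iff.1 hs with ⟨c, hc, u, hu, rfl⟩
      rcases Filter.mem_generate_iff.1 hu with ⟨t, htS, htfin, htsub⟩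
      choose g hgX hgf using fun s : t => htS s.2
      have := htfin.to_subtype
      set F : Set G := Set.range g with hF
      have hFX : F ⊆ X := by rintro _ ⟨s, rfl⟩; exact hgX s
      have hFfin : F.Finite := Set.finite_range g
      have hsub : (⋂ a ∈ F, f a) ⊆ ⋂₀ t := by
        intro x hx
        intro s hst
        have hx' : x ∈ f (g ⟨s, hst⟩) := by
          have := Set.mem_iInter₂.1 hx (g ⟨s, hst⟩) ⟨⟨s, hst⟩, rfl⟩
          exact this
        rwa [hgf ⟨s, hst⟩] at hx'
      have hinf : (⋂ a ∈ F, f a).Infinite := fun hfin => hX F hFX hFfin hfin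
      have hinf2 : ((⋂ a ∈ F, f a) \ cᶜ).Infinite := hinf.diff hc
      rcases hinf2.nonempty with ⟨x, hx1, hx2⟩
      exact ⟨x, by simpa using hx2, htsub (hsub hx1)⟩
    obtain ⟨p, hp⟩ := Ultrafilter.exists_le (Filter.cofinite ⊓ Filter.generate (f '' X))
    have hpfree : IsFreeUF p :=
      (isFreeUF_iff_le_cofinite p).2 (hp.trans inf_le_left)
    have hpmem : ∀ g ∈ X, f g ∈ p := fun g hg =>
      hp.trans inf_le_right (Filter.mem_generate_of_mem ⟨g, hg, rfl⟩)
    set Y : Set G := (·⁻¹) '' X with hY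
    have hYinf : Y.Infinite := hXinf.image inv_injective.injOn
    have hqne : (Filter.cofinite ⊓ Filter.principal Y).NeBot := by
      have := Set.infinite_iff_frequently_cofinite.1 hYinf
      rwa [Filter.frequently_iff_neBot] at this
    obtain ⟨q, hq⟩ := Ultrafilter.exists_le (Filter.cofinite ⊓ Filter.principal Y)
    have hqfree : IsFreeUF q :=
      (isFreeUF_iff_le_cofinite q).2 (hq.trans inf_le_left)
    have hYq : Y ∈ q := hq.trans inf_le_right (Filter.mem_principal_self Y)
    refine ⟨q, p, hqfree, hpfree, ?_⟩
    rw [mem_ufMul_iff]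
    refine q.toFilter.mem_of_superset hYq ?_
    rintro _ ⟨g, hg, rfl⟩
    show (fun y => g⁻¹ * y) ⁻¹' A ∈ p
    rw [key g]
    exact hpmem g hg
  · rintro ⟨q, p, hqfree, hpfree, hA⟩
    rw [mem_ufMul_iff] at hA
    set S : Set G := {x | (fun y => x * y) ⁻¹' A ∈ p} with hS
    refine ⟨(·⁻¹) '' S, (infinite_of_mem_free hqfree hA).image inv_injective.injOn,
      fun F hFsub hFfin hfin => ?_⟩
    have hmem : (⋂ g ∈ F, (fun x => g * x) '' A) ∈ (p : Filter G) := by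
      rw [Filter.biInter_mem hFfin]
      intro g hg
      rcases hFsub hg with ⟨x, hxS, rfl⟩
      rw [← key x⁻¹]
      simpa [hS] using hxS
    exact infinite_of_mem_free hpfree hmem hfin
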